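/- Let K be real, t = tanh(K), and let σ₁, …, σ₆ ∈ {−1, 1}. Then tanh(K·(σ₁+⋯+σ₆)) = a₁(t)·∑_{l} σ_l + a₃(t)·∑_{l₁<l₂<l₃} σ_{l₁}σ_{l₂}σ_{l₃} + a₅(t)·∑_{l₁<⋯<l₅} σ_{l₁}σ_{l₂}σ_{l₃}σ_{l₄}σ_{l₅}, where the sums are over the 6, 20 and 6 ways of choosing 1, 3 or 5 of the six spins. -/

import Mathlib

open scoped BigOperators

/-- Coefficient `a₁(t)`. -/
noncomputable def a1 (t : ℝ) : ℝ :=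
  t * (1 + 16 * t ^ 2 + 46 * t ^ 4 + 16 * t ^ 6 + t ^ 8) /
    ((1 + t ^ 2) * (1 + 6 * t ^ 2 + t ^ 4) * (1 + 14 * t ^ 2 + t ^ 4))

/-- Coefficient `a₃(t)`. -/
noncomputable def a3 (t : ℝ) : ℝ :=
  -2 * t ^ 3 / ((1 + t ^ 2) * (1 + 14 * t ^ 2 + t ^ 4))

/-- Coefficient `a₅(t)`. -/
noncomputable def a5 (t : ℝ) : ℝ :=
  16 * t ^ 5 / ((1 + t ^ 2) * (1 + 6 * t ^ 2 + t ^ 4) * (1 + 14 * t ^ 2 + t ^ 4))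

lemma tanh_eq_exp' (x : ℝ) : Real.tanh x = (Real.exp (2*x) - 1) / (Real.exp (2*x) + 1) := by
  have h : Real.exp x ≠ 0 := (Real.exp_pos x).ne'
  rw [Real.tanh_eq_sinh_div_cosh, Real.sinh_eq, Real.cosh_eq, two_mul, Real.exp_add]
  rw [Real.exp_neg]
  field_simp

lemma id6 (v : ℝ) (hv : 0 < v) :
    (v^6-1)/(v^6+1) = 6 * a1 ((v-1)/(v+1)) + 20 * a3 ((v-1)/(v+1)) + 6 * a5 ((v-1)/(v+1)) := by
  have h0 : v + 1 ≠ 0 := by positivity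
  have h1 : 1 + ((v-1)/(v+1)) ^ 2 ≠ 0 := by positivity
  have h2 : 1 + 6*((v-1)/(v+1)) ^ 2 + ((v-1)/(v+1))^4 ≠ 0 := by positivity
  have h3 : 1 + 14*((v-1)/(v+1)) ^ 2 + ((v-1)/(v+1))^4 ≠ 0 := by positivity
  have h4 : v^6 + 1 ≠ 0 := by positivity
  unfold a1 a3 a5
  field_simp
  ring

lemma id4 (v : ℝ) (hv : 0 < v) :
    (v^4-1)/(v^4+1) = 4 * a1 ((v-1)/(v+1)) - 4 * a5 ((v-1)/(v+1)) := by
  have h0 : v + 1 ≠ 0 := by positivity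
  have h1 : 1 + ((v-1)/(v+1)) ^ 2 ≠ 0 := by positivity
  have h2 : 1 + 6*((v-1)/(v+1)) ^ 2 + ((v-1)/(v+1))^4 ≠ 0 := by positivity
  have h3 : 1 + 14*((v-1)/(v+1)) ^ 2 + ((v-1)/(v+1))^4 ≠ 0 := by positivity
  have h4 : v^4 + 1 ≠ 0 := by positivity
  unfold a1 a5
  field_simp
  ring

lemma id2 (v : ℝ) (hv : 0 < v) :
    (v^2-1)/(v^2+1) = 2 * a1 ((v-1)/(v+1)) - 4 * a3 ((v-1)/(v+1)) + 2 * a5 ((v-1)/(v+1)) := by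
  have h0 : v + 1 ≠ 0 := by positivity
  have h1 : 1 + ((v-1)/(v+1)) ^ 2 ≠ 0 := by positivity
  have h2 : 1 + 6*((v-1)/(v+1)) ^ 2 + ((v-1)/(v+1))^4 ≠ 0 := by positivity
  have h3 : 1 + 14*((v-1)/(v+1)) ^ 2 + ((v-1)/(v+1))^4 ≠ 0 := by positivity
  have h4 : v^2 + 1 ≠ 0 := by positivity
  unfold a1 a3 a5
  field_simp
  ring

lemma exp_pow (K : ℝ) (n : ℕ) : Real.exp (2*(n*K)) = (Real.exp (2*K)) ^ n := by
  rw [show 2*((n:ℝ)*K) = n*(2*K) by ring, Real.exp_nat_mul]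

lemma C6 (K : ℝ) : Real.tanh (K*6) =
    6 * a1 (Real.tanh K) + 20 * a3 (Real.tanh K) + 6 * a5 (Real.tanh K) := by
  have hv : 0 < Real.exp (2*K) := Real.exp_pos _
  have h1 : Real.tanh K = (Real.exp (2*K) - 1)/(Real.exp (2*K) + 1) := tanh_eq_exp' K
  have h6 : Real.tanh (K*6) = ((Real.exp (2*K))^6 - 1)/((Real.exp (2*K))^6 + 1) := by
    rw [show K*6 = (6:ℕ)*K by push_cast; ring, tanh_eq_exp', exp_pow]
  rw [h1, h6]
  exact id6 _ hv

lemma C4 (K : ℝ) : Real.tanh (K*4) =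
    4 * a1 (Real.tanh K) - 4 * a5 (Real.tanh K) := by
  have hv : 0 < Real.exp (2*K) := Real.exp_pos _
  have h1 : Real.tanh K = (Real.exp (2*K) - 1)/(Real.exp (2*K) + 1) := tanh_eq_exp' K
  have h4 : Real.tanh (K*4) = ((Real.exp (2*K))^4 - 1)/((Real.exp (2*K))^4 + 1) := by
    rw [show K*4 = (4:ℕ)*K by push_cast; ring, tanh_eq_exp', exp_pow]
  rw [h1, h4]
  exact id4 _ hv

lemma C2 (K : ℝ) : Real.tanh (K*2) =
    2 * a1 (Real.tanh K) - 4 * a3 (Real.tanh K) + 2 * a5 (Real.tanh K) := by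
  have hv : 0 < Real.exp (2*K) := Real.exp_pos _
  have h1 : Real.tanh K = (Real.exp (2*K) - 1)/(Real.exp (2*K) + 1) := tanh_eq_exp' K
  have h2 : Real.tanh (K*2) = ((Real.exp (2*K))^2 - 1)/((Real.exp (2*K))^2 + 1) := by
    rw [show K*2 = (2:ℕ)*K by push_cast; ring, tanh_eq_exp', exp_pow]
  rw [h1, h2]
  exact id2 _ hv

lemma sum1 (f : Fin 6 → ℝ) : ∑ s ∈ Finset.powersetCard 1 (Finset.univ : Finset (Fin 6)), ∏ l ∈ s, f l =
    f 0 + f 1 + f 2 + f 3 + f 4 + f 5 := by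
  rw [show Finset.powersetCard 1 (Finset.univ : Finset (Fin 6)) = {{0},{1},{2},{3},{4},{5}} from by decide]
  simp +decide [Finset.sum_insert, Finset.prod_insert]
  ring

lemma sum3 (f : Fin 6 → ℝ) : ∑ s ∈ Finset.powersetCard 3 (Finset.univ : Finset (Fin 6)), ∏ l ∈ s, f l =
    f 0*f 1*f 2 + f 0*f 1*f 3 + f 0*f 1*f 4 + f 0*f 1*f 5 + f 0*f 2*f 3 + f 0*f 2*f 4 + f 0*f 2*f 5 + f 0*f 3*f 4 + f 0*f 3*f 5 + f 0*f 4*f 5 + f 1*f 2*f 3 + f 1*f 2*f 4 + f 1*f 2*f 5 + f 1*f 3*f 4 + f 1*f 3*f 5 + f 1*f 4*f 5 + f 2*f 3*f 4 + f 2*f 3*f 5 + f 2*f 4*f 5 + f 3*f 4*f 5 := by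
  rw [show Finset.powersetCard 3 (Finset.univ : Finset (Fin 6)) = {{0,1,2},{0,1,3},{0,1,4},{0,1,5},{0,2,3},{0,2,4},{0,2,5},{0,3,4},{0,3,5},{0,4,5},{1,2,3},{1,2,4},{1,2,5},{1,3,4},{1,3,5},{1,4,5},{2,3,4},{2,3,5},{2,4,5},{3,4,5}} from by decide]
  simp +decide [Finset.sum_insert, Finset.prod_insert]
  ring

lemma sum5 (f : Fin 6 → ℝ) : ∑ s ∈ Finset.powersetCard 5 (Finset.univ : Finset (Fin 6)), ∏ l ∈ s, f l =
    f 0*f 1*f 2*f 3*f 4 + f 0*f 1*f 2*f 3*f 5 + f 0*f 1*f 2*f 4*f 5 + f 0*f 1*f 3*f 4*f 5 + f 0*f 2*f 3*f 4*f 5 + f 1*f 2*f 3*f 4*f 5 := by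
  rw [show Finset.powersetCard 5 (Finset.univ : Finset (Fin 6)) = {{0,1,2,3,4},{0,1,2,3,5},{0,1,2,4,5},{0,1,3,4,5},{0,2,3,4,5},{1,2,3,4,5}} from by decide]
  simp +decide [Finset.sum_insert, Finset.prod_insert]
  ring

lemma master (K x0 x1 x2 x3 x4 x5 : ℝ)
    (h0 : x0 = 1 ∨ x0 = -1) (h1 : x1 = 1 ∨ x1 = -1) (h2 : x2 = 1 ∨ x2 = -1)
    (h3 : x3 = 1 ∨ x3 = -1) (h4 : x4 = 1 ∨ x4 = -1) (h5 : x5 = 1 ∨ x5 = -1) :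
    Real.tanh (K * (x0 + x1 + x2 + x3 + x4 + x5)) =
      a1 (Real.tanh K) * (x0 + x1 + x2 + x3 + x4 + x5) +
      a3 (Real.tanh K) * (x0*x1*x2 + x0*x1*x3 + x0*x1*x4 + x0*x1*x5 + x0*x2*x3 + x0*x2*x4 + x0*x2*x5 + x0*x3*x4 + x0*x3*x5 + x0*x4*x5 + x1*x2*x3 + x1*x2*x4 + x1*x2*x5 + x1*x3*x4 + x1*x3*x5 + x1*x4*x5 + x2*x3*x4 + x2*x3*x5 + x2*x4*x5 + x3*x4*x5) +
      a5 (Real.tanh K) * (x0*x1*x2*x3*x4 + x0*x1*x2*x3*x5 + x0*x1*x2*x4*x5 + x0*x1*x3*x4*x5 + x0*x2*x3*x4*x5 + x1*x2*x3*x4*x5) := by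
  rcases h0 with rfl | rfl <;> rcases h1 with rfl | rfl <;> rcases h2 with rfl | rfl <;>
    rcases h3 with rfl | rfl <;> rcases h4 with rfl | rfl <;> rcases h5 with rfl | rfl <;>
    norm_num <;> linarith [C2 K, C4 K, C6 K]

theorem tanh_six_spin_expansion (K : ℝ) (σ : Fin 6 → ℤ) (hσ : ∀ l, σ l = 1 ∨ σ l = -1) :
    Real.tanh (K * ((∑ l : Fin 6, σ l : ℤ) : ℝ)) =
      a1 (Real.tanh K) *
          (∑ s ∈ Finset.powersetCard 1 (Finset.univ : Finset (Fin 6)),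
            ∏ l ∈ s, ((σ l : ℤ) : ℝ)) +
        a3 (Real.tanh K) *
          (∑ s ∈ Finset.powersetCard 3 (Finset.univ : Finset (Fin 6)),
            ∏ l ∈ s, ((σ l : ℤ) : ℝ)) +
        a5 (Real.tanh K) *
          (∑ s ∈ Finset.powersetCard 5 (Finset.univ : Finset (Fin 6)),
            ∏ l ∈ s, ((σ l : ℤ) : ℝ)) := by
  have hcast : ∀ l, ((σ l : ℤ) : ℝ) = 1 ∨ ((σ l : ℤ) : ℝ) = -1 := by
    intro l
    rcases hσ l with h | h <;> [left; right] <;> rw [h] <;> norm_num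
  rw [sum1 (fun l => ((σ l : ℤ) : ℝ)), sum3 (fun l => ((σ l : ℤ) : ℝ)),
    sum5 (fun l => ((σ l : ℤ) : ℝ)), Fin.sum_univ_six]
  push_cast
  exact master K _ _ _ _ _ _ (hcast 0) (hcast 1) (hcast 2) (hcast 3) (hcast 4) (hcast 5)
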